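/- (Proposition 4) Let Γ be a finite nonempty set and Δ : Γ → Γ → ℤ a symmetric matrix with det Δ ≠ 0. Then the map sending ψ ∈ ker(Δ⊗(ℝ/ℤ)) to the homomorphism Q(−,ψ) : G(Γ) → ℝ/ℤ, [f] ↦ Σ_{v∈Γ} f(v)·ψ(v), is well defined (the value is independent of the representative f of the class in G(Γ) = ℤ^Γ/Δ(ℤ^Γ)) and is a group isomorphism from ker(Δ⊗(ℝ/ℤ)) onto the Pontryagin dual Hom(G(Γ), ℝ/ℤ). In particular the sandpile group of a finite graph is canonically self-dual. -/

import Mathlib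

open scoped BigOperators

/-- The homomorphism `Δ ⊗ A : A^Γ → A^Γ` induced by an integer matrix `Δ`. -/
def lapHom {Γ : Type} [Fintype Γ] (Δ : Matrix Γ Γ ℤ) (A : Type) [AddCommGroup A] :
    (Γ → A) →+ (Γ → A) where
  toFun f v := ∑ w, Δ v w • f w
  map_zero' := by funext v; simp
  map_add' f g := by funext v; simp [smul_add, Finset.sum_add_distrib]

lemma single_pairing {Γ : Type} [Fintype Γ] [DecidableEq Γ]
    (ψ : Γ → AddCircle (1 : ℝ)) (v : Γ) :
    ∑ u, (Pi.single v 1 : Γ → ℤ) u • ψ u = ψ v := by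
  rw [Finset.sum_eq_single v]
  · simp
  · intro b _ hb; simp [Pi.single_apply, hb.symm]
  · intro h; exact absurd (Finset.mem_univ v) h

theorem sandpile_group_canonically_self_dual
    (Γ : Type) [Fintype Γ] [DecidableEq Γ] [Nonempty Γ]
    (Δ : Matrix Γ Γ ℤ) (hsym : Δ.IsSymm) (hΔ : Δ.det ≠ 0) :
    -- well defined: the pairing only depends on the class of `f` in `G(Γ)`
    (∀ ψ ∈ (lapHom Δ (AddCircle (1 : ℝ))).ker, ∀ f g : Γ → ℤ,
      (QuotientAddGroup.mk f : (Γ → ℤ) ⧸ (lapHom Δ ℤ).range) = QuotientAddGroup.mk g →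
      ∑ v, f v • ψ v = ∑ v, g v • ψ v) ∧
    -- the assignment `ψ ↦ Q(−, ψ)` is additive
    (∀ ψ₁ ψ₂ : Γ → AddCircle (1 : ℝ), ∀ f : Γ → ℤ,
      ∑ v, f v • (ψ₁ + ψ₂) v = ∑ v, f v • ψ₁ v + ∑ v, f v • ψ₂ v) ∧
    -- injective
    (∀ ψ₁ ∈ (lapHom Δ (AddCircle (1 : ℝ))).ker,
     ∀ ψ₂ ∈ (lapHom Δ (AddCircle (1 : ℝ))).ker,
      (∀ f : Γ → ℤ, ∑ v, f v • ψ₁ v = ∑ v, f v • ψ₂ v) → ψ₁ = ψ₂) ∧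
    -- surjective onto the Pontryagin dual `Hom(G(Γ), ℝ/ℤ)`
    (∀ χ : ((Γ → ℤ) ⧸ (lapHom Δ ℤ).range) →+ AddCircle (1 : ℝ),
      ∃ ψ ∈ (lapHom Δ (AddCircle (1 : ℝ))).ker, ∀ f : Γ → ℤ,
        χ (QuotientAddGroup.mk f) = ∑ v, f v • ψ v) := by
  refine ⟨?_, ?_, ?_, ?_⟩
  · -- well-definedness
    intro ψ hψ f g hfg
    rw [QuotientAddGroup.eq] at hfg
    obtain ⟨h, hh⟩ := hfg
    have hker : ∀ w, ∑ v, Δ w v • ψ v = 0 := by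
      intro w
      have := congrFun hψ w
      simpa [lapHom] using this
    have key : ∑ v, g v • ψ v - ∑ v, f v • ψ v = 0 := by
      calc ∑ v, g v • ψ v - ∑ v, f v • ψ v
          = ∑ v, (g v - f v) • ψ v := by
            rw [← Finset.sum_sub_distrib]; congr 1; funext v; rw [sub_smul]
        _ = ∑ v, ∑ w, (Δ v w * h w) • ψ v := by
            congr 1; funext v
            have hv : g v - f v = ∑ w, Δ v w * h w := by
              have h2 := congrFun hh v
              simp only [lapHom, AddMonoidHom.coe_mk, ZeroHom.coe_mk, smul_eq_mul,
                Pi.add_apply, Pi.neg_apply] at h2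
              linarith
            rw [hv, Finset.sum_smul]
        _ = ∑ w, ∑ v, (Δ v w * h w) • ψ v := Finset.sum_comm
        _ = ∑ w, h w • (∑ v, Δ w v • ψ v) := by
            congr 1; funext w
            rw [Finset.smul_sum]
            congr 1; funext v
            rw [hsym.apply v w, mul_comm, mul_smul]
        _ = 0 := by simp [hker]
    exact (sub_eq_zero.mp key).symm
  · -- additivity
    intro ψ₁ ψ₂ f
    rw [← Finset.sum_add_distrib]
    congr 1; funext v; simp [smul_add]
  · -- injectivity
    intro ψ₁ _ ψ₂ _ hQ
    funext v
    have := hQ (Pi.single v 1)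
    rwa [single_pairing, single_pairing] at this
  · -- surjectivity
    intro χ
    set χ' : (Γ → ℤ) →+ AddCircle (1 : ℝ) :=
      χ.comp (QuotientAddGroup.mk' (lapHom Δ ℤ).range) with hχ'
    have hχ'app : ∀ f : Γ → ℤ, χ (QuotientAddGroup.mk f) = χ' f := fun f => rfl
    set ψ : Γ → AddCircle (1 : ℝ) := fun v => χ' (Pi.single v 1) with hψdef
    have hdecomp : ∀ f : Γ → ℤ, f = ∑ v, f v • (Pi.single v 1 : Γ → ℤ) := by
      intro f; funext u
      simp [Pi.single_apply, Finset.sum_apply]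
    have hpair : ∀ f : Γ → ℤ, χ (QuotientAddGroup.mk f) = ∑ v, f v • ψ v := by
      intro f
      rw [hχ'app]
      conv_lhs => rw [hdecomp f]
      rw [map_sum]
      simp only [map_zsmul]
      rfl
    refine ⟨ψ, ?_, hpair⟩
    rw [AddMonoidHom.mem_ker]
    funext v
    have h1 : (lapHom Δ (AddCircle (1:ℝ)) ψ) v = ∑ w, Δ v w • ψ w := rfl
    have h2 : ∑ w, Δ v w • ψ w = χ' (∑ w, Δ v w • (Pi.single w 1 : Γ → ℤ)) := by
      rw [map_sum]; simp only [map_zsmul]; rfl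
    have h3 : (∑ w, Δ v w • (Pi.single w 1 : Γ → ℤ)) = lapHom Δ ℤ (Pi.single v 1) := by
      funext u
      simp [lapHom, Pi.single_apply, Finset.sum_apply, hsym.apply u v, mul_comm]
    have hm : lapHom Δ ℤ (Pi.single v 1) ∈ (lapHom Δ ℤ).range :=
      AddMonoidHom.mem_range.mpr ⟨_, rfl⟩
    have h4 : χ' (lapHom Δ ℤ (Pi.single v 1)) = 0 := by
      rw [← hχ'app, (QuotientAddGroup.eq_zero_iff _).mpr hm, map_zero]
    rw [h1, h2, h3, h4]
    rfl
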